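/- arXiv:2312.12698 — 2 statements merged into one kernel-verified Lean document; each statement's English description precedes it below -/
import Mathlib

section
/- Let a configuration on Z have occupied nodes exactly an interval-spanning set with leftmost occupied node a and rightmost occupied node b, with M = b - a + 1 nodes between the borders inclusive. Under the FSYNC dynamics where at each round every robot on the leftmost occupied node moves one step right and every robot on the rightmost occupied node moves one step left (and no other robot moves), if M is odd then after exactly (M-1)/2 rounds all robots occupy the single node (a+b)/2. -/
/-- One FSYNC round of the border-contraction dynamics: all robots at the
leftmost occupied node move one step right, all robots at the rightmost
occupied node move one step left, and no other robot moves. -/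
noncomputable def borderStep (f : ℤ →₀ ℕ) : ℤ →₀ ℕ :=
  if h : f.support.Nonempty then
    let a := f.support.min' h
    let b := f.support.max' h
    if a = b then f
    else ((f.erase a).erase b) + Finsupp.single (a+1) (f a) + Finsupp.single (b-1) (f b)
  else f

lemma borderStep_eq (f : ℤ →₀ ℕ) (h : f.support.Nonempty) (a b : ℤ)
    (ha : f.support.min' h = a) (hb : f.support.max' h = b) (hab : a ≠ b) :
    borderStep f
      = ((f.erase a).erase b) + Finsupp.single (a+1) (f a) + Finsupp.single (b-1) (f b) := by
  rw [borderStep, dif_pos h]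
  simp only [ha, hb, if_neg hab]

lemma borderStep_apply (f : ℤ →₀ ℕ) (h : f.support.Nonempty) (a b : ℤ)
    (ha : f.support.min' h = a) (hb : f.support.max' h = b) (hab : a ≠ b) (x : ℤ) :
    borderStep f x
      = (if x = b then 0 else if x = a then 0 else f x)
        + (if a + 1 = x then f a else 0) + (if b - 1 = x then f b else 0) := by
  rw [borderStep_eq f h a b ha hb hab]
  simp only [Finsupp.coe_add, Pi.add_apply, Finsupp.single_apply, Finsupp.erase_apply]

lemma step_spec (f : ℤ →₀ ℕ) (h : f.support.Nonempty) (a b : ℤ)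
    (ha : f.support.min' h = a) (hb : f.support.max' h = b) (hab : a + 1 < b) :
    ∃ h' : (borderStep f).support.Nonempty,
      (borderStep f).support.min' h' = a + 1 ∧ (borderStep f).support.max' h' = b - 1 := by
  have hane : a ≠ b := by linarith
  have haS : a ∈ f.support := ha ▸ f.support.min'_mem h
  have hbS : b ∈ f.support := hb ▸ f.support.max'_mem h
  have hfa : f a ≠ 0 := Finsupp.mem_support_iff.mp haS
  have hfb : f b ≠ 0 := Finsupp.mem_support_iff.mp hbS
  have hmem1 : (a + 1) ∈ (borderStep f).support := by
    rw [Finsupp.mem_support_iff, borderStep_apply f h a b ha hb hane]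
    have : a + 1 ≠ b := by linarith
    simp [this]
    omega
  have hmem2 : (b - 1) ∈ (borderStep f).support := by
    rw [Finsupp.mem_support_iff, borderStep_apply f h a b ha hb hane]
    have h1 : b - 1 ≠ b := by linarith
    have h2 : b - 1 ≠ a := by linarith
    simp [h1, h2]
    omega
  have hrange : ∀ x ∈ (borderStep f).support, a + 1 ≤ x ∧ x ≤ b - 1 := by
    intro x hx
    rw [Finsupp.mem_support_iff, borderStep_apply f h a b ha hb hane] at hx
    by_cases hx1 : a + 1 = x
    · constructor <;> linarith
    by_cases hx2 : b - 1 = x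
    · constructor <;> linarith
    simp [hx1, hx2] at hx
    have hxS : x ∈ f.support := Finsupp.mem_support_iff.mpr hx.2.2
    have hax : a ≤ x := ha ▸ f.support.min'_le x hxS
    have hxb : x ≤ b := hb ▸ f.support.le_max' x hxS
    omega
  refine ⟨⟨a + 1, hmem1⟩, ?_, ?_⟩
  · exact le_antisymm (Finset.min'_le _ _ hmem1)
      (Finset.le_min' _ _ _ (fun y hy => (hrange y hy).1))
  · exact le_antisymm (Finset.max'_le _ _ _ (fun y hy => (hrange y hy).2))
      (Finset.le_max' _ _ hmem2)

/-- If the number of nodes between the borders inclusive, `M = b - a + 1`,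
is odd (i.e. `b - a = 2k`), then after exactly `(M-1)/2 = k` rounds all
robots occupy the single node `(a+b)/2 = a + k`. -/
theorem stmt2 (f : ℤ →₀ ℕ) (h : f.support.Nonempty) (a b : ℤ)
    (ha : f.support.min' h = a) (hb : f.support.max' h = b)
    (k : ℕ) (hM : b - a = 2 * (k : ℤ)) :
    (borderStep^[k] f).support = {a + (k : ℤ)} := by
  induction k generalizing f a b with
  | zero =>
    simp only [Function.iterate_zero, id_eq, Nat.cast_zero, add_zero]
    have hba : b = a := by omega
    apply Finset.eq_singleton_iff_unique_mem.mpr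
    constructor
    · exact ha ▸ f.support.min'_mem h
    · intro x hx
      have := ha ▸ f.support.min'_le x hx
      have := hb ▸ f.support.le_max' x hx
      omega
  | succ k ih =>
    have hab : a + 1 < b := by push_cast at hM ⊢; omega
    obtain ⟨h', h1, h2⟩ := step_spec f h a b ha hb hab
    rw [Function.iterate_succ_apply]
    have := ih (borderStep f) h' (a+1) (b-1) h1 h2 (by push_cast at hM ⊢; omega)
    rw [this]
    congr 1
    push_cast
    ring
end

section
/- For any configuration on Z with support of size exactly 2 at adjacent nodes {u, u+1}, and any deterministic per-node move assignment in which at least one robot at each node is commanded to move, there is a choice of which robots move (an adversarial subset, modeling crashes or SSYNC activation) such that the resulting configuration still has at least 2 occupied nodes. -/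
lemma two_le_card {α : Type*} [DecidableEq α] {s : Finset α} {a b : α}
    (ha : a ∈ s) (hb : b ∈ s) (hab : a ≠ b) : 2 ≤ s.card :=
  Finset.one_lt_card.mpr ⟨a, ha, b, hb, hab⟩

/-- From a configuration supported on two adjacent nodes `{u, u+1}`, for any
move assignment (moves in `{-1,0,1}`) in which at least one robot at each node
is commanded to move, the adversary can select a nonempty subset of robots to
execute their moves so that at least `2` nodes remain occupied. -/
theorem stmt6 {R : Type*} [Fintype R] [DecidableEq R] (u : ℤ)
    (pos : R → ℤ) (hpos : ∀ r, pos r = u ∨ pos r = u + 1)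
    (h1 : ∃ r, pos r = u) (h2 : ∃ r, pos r = u + 1)
    (move : R → ℤ) (hmove : ∀ r, move r = -1 ∨ move r = 0 ∨ move r = 1)
    (hm1 : ∃ r, pos r = u ∧ move r ≠ 0)
    (hm2 : ∃ r, pos r = u + 1 ∧ move r ≠ 0) :
    ∃ S : Finset R, S.Nonempty ∧
      2 ≤ (Finset.univ.image
        (fun r => if r ∈ S then pos r + move r else pos r)).card := by
  obtain ⟨r1, hr1, hn1⟩ := hm1
  obtain ⟨r2, hr2, hn2⟩ := hm2
  have hne : r1 ≠ r2 := by
    intro h; rw [h, hr2] at hr1; omega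
  have hm1' : move r1 = -1 ∨ move r1 = 1 := by rcases hmove r1 with h|h|h <;> tauto
  have hm2' : move r2 = -1 ∨ move r2 = 1 := by rcases hmove r2 with h|h|h <;> tauto
  rcases hm1' with hA | hA
  · -- r1 moves to u-1, r2 stays at u+1
    refine ⟨{r1}, Finset.singleton_nonempty _, ?_⟩
    apply two_le_card (a := pos r1 + move r1) (b := pos r2)
    · exact Finset.mem_image.mpr ⟨r1, Finset.mem_univ _, by simp⟩
    · exact Finset.mem_image.mpr ⟨r2, Finset.mem_univ _, by simp [hne.symm]⟩
    · rw [hr1, hr2, hA]; omega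
  · rcases hm2' with hB | hB
    · -- r1 → u+1, r2 → u : activate both
      refine ⟨{r1, r2}, ⟨r1, by simp⟩, ?_⟩
      apply two_le_card (a := pos r1 + move r1) (b := pos r2 + move r2)
      · exact Finset.mem_image.mpr ⟨r1, Finset.mem_univ _, by simp⟩
      · exact Finset.mem_image.mpr ⟨r2, Finset.mem_univ _, by simp⟩
      · rw [hr1, hr2, hA, hB]; omega
    · -- r2 → u+2, r1 stays at u
      refine ⟨{r2}, Finset.singleton_nonempty _, ?_⟩
      apply two_le_card (a := pos r1) (b := pos r2 + move r2)
      · exact Finset.mem_image.mpr ⟨r1, Finset.mem_univ _, by simp [hne]⟩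
      · exact Finset.mem_image.mpr ⟨r2, Finset.mem_univ _, by simp⟩
      · rw [hr1, hr2, hB]; omega
end
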